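/- arXiv:2406.00710 — 2 statements merged into one kernel-verified Lean document; each statement's English description precedes it below -/
import Mathlib

section
/- For every n ≥ 2, the power graph of the generalised quaternion group Q_{2^{n+1}} is isomorphic (as a simple graph) to the commuting graph of the dihedral group D_{2·2^n} of the same order 2^{n+1}; an isomorphism is given by the vertex map h^i x^j ↦ a^i b^j. -/
/-- The power graph of a group: distinct `x`, `y` are adjacent iff one is a power of the other. -/
def powerGraph (G : Type*) [Group G] : SimpleGraph G where
  Adj x y := x ≠ y ∧ ((∃ k : ℤ, x = y ^ k) ∨ (∃ k : ℤ, y = x ^ k))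
  symm := by
    constructor
    rintro x y ⟨hne, h | h⟩
    · exact ⟨hne.symm, Or.inr h⟩
    · exact ⟨hne.symm, Or.inl h⟩
  loopless := by constructor; rintro x ⟨hne, -⟩; exact hne rfl

/-- The commuting graph of a group: distinct `x`, `y` are adjacent iff they commute. -/
def commutingGraph (G : Type*) [Group G] : SimpleGraph G where
  Adj x y := x ≠ y ∧ x * y = y * x
  symm := by constructor; rintro x y ⟨hne, h⟩; exact ⟨hne.symm, h.symm⟩
  loopless := by constructor; rintro x ⟨hne, -⟩; exact hne rfl

/-- The enhanced power graph of a group: distinct `x`, `y` are adjacent iff `⟨x, y⟩` is cyclic. -/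
def enhancedPowerGraph (G : Type*) [Group G] : SimpleGraph G where
  Adj x y := x ≠ y ∧ IsCyclic ↥(Subgroup.closure {x, y})
  symm := by constructor; rintro x y ⟨hne, h⟩; rw [Set.pair_comm] at h; exact ⟨hne.symm, h⟩
  loopless := by constructor; rintro x ⟨hne, -⟩; exact hne rfl

lemma powerGraph_adj {G : Type*} [Group G] {x y : G} :
    (powerGraph G).Adj x y ↔ x ≠ y ∧ ((∃ k : ℤ, x = y ^ k) ∨ (∃ k : ℤ, y = x ^ k)) := Iff.rfl

lemma commutingGraph_adj {G : Type*} [Group G] {x y : G} :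
    (commutingGraph G).Adj x y ↔ x ≠ y ∧ x * y = y * x := Iff.rfl


open QuaternionGroup in
lemma a_pow_nat (M : ℕ) (i : ZMod (2*M)) (k : ℕ) :
    (a i : QuaternionGroup M) ^ k = a (i * (k : ZMod (2*M))) := by
  induction k with
  | zero => rw [pow_zero, Nat.cast_zero, mul_zero, QuaternionGroup.one_def]
  | succ k ih => rw [pow_succ, ih, a_mul_a]; congr 1; push_cast; ring

open QuaternionGroup in
lemma a_inv (M : ℕ) (i : ZMod (2*M)) : (a i : QuaternionGroup M)⁻¹ = a (-i) := by
  apply inv_eq_of_mul_eq_one_right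
  rw [a_mul_a, add_neg_cancel, QuaternionGroup.one_def]

open QuaternionGroup in
lemma a_zpow (M : ℕ) (i : ZMod (2*M)) (k : ℤ) :
    (a i : QuaternionGroup M) ^ k = a (i * (k : ZMod (2*M))) := by
  rcases k.eq_nat_or_neg with ⟨m, rfl | rfl⟩
  · rw [zpow_natCast, a_pow_nat]; congr 1; push_cast; ring
  · rw [zpow_neg, zpow_natCast, a_pow_nat, a_inv]; congr 1; push_cast; ring

open QuaternionGroup in
lemma xa_zpow_even (M : ℕ) (j : ZMod (2*M)) (q : ℤ) :
    (xa j : QuaternionGroup M) ^ (2*q) = a ((M : ZMod (2*M)) * (q : ZMod (2*M))) := by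
  rw [zpow_mul, show ((2:ℤ) = ((2:ℕ):ℤ)) from rfl, zpow_natCast, xa_sq, a_zpow]

open QuaternionGroup in
lemma xa_zpow_odd (M : ℕ) (j : ZMod (2*M)) (q : ℤ) :
    (xa j : QuaternionGroup M) ^ (2*q+1) = xa (j - (M : ZMod (2*M)) * (q : ZMod (2*M))) := by
  rw [zpow_add, zpow_one, xa_zpow_even, a_mul_xa]

lemma Mq_cases (M : ℕ) (q : ℤ) :
    (M : ZMod (2*M)) * (q : ZMod (2*M)) = 0 ∨
      (M : ZMod (2*M)) * (q : ZMod (2*M)) = (M : ZMod (2*M)) := by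
  have h2M : ((2*M : ℕ) : ZMod (2*M)) = 0 := ZMod.natCast_self _
  push_cast at h2M
  rcases Int.even_or_odd q with ⟨t, rfl⟩ | ⟨t, rfl⟩
  · left
    calc (M : ZMod (2*M)) * (((t:ℤ) + t : ℤ) : ZMod (2*M)) = (2 * M) * t := by push_cast; ring
    _ = 0 := by rw [h2M, zero_mul]
  · right
    calc (M : ZMod (2*M)) * ((2*(t:ℤ)+1 : ℤ) : ZMod (2*M)) = (2 * M) * t + M := by push_cast; ring
    _ = M := by rw [h2M, zero_mul, zero_add]

/-- solving a linear congruence from divisibility of gcd -/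
lemma zmod_dvd_solve (N : ℕ) (x y : ℕ) (h : Nat.gcd y N ∣ x) :
    ∃ k : ℤ, (x : ZMod N) = (y : ZMod N) * (k : ZMod N) := by
  obtain ⟨c, hc⟩ := h
  have hb := Int.gcd_eq_gcd_ab (y : ℤ) (N : ℤ)
  refine ⟨Int.gcdA y N * c, ?_⟩
  have hN : ((N : ℤ) : ZMod N) = 0 := by push_cast; exact ZMod.natCast_self _
  have : ((Nat.gcd y N : ℤ) : ZMod N) = (y : ZMod N) * ((Int.gcdA y N : ℤ) : ZMod N) := by
    rw [show (Nat.gcd y N : ℤ) = (y:ℤ) * Int.gcdA y N + (N:ℤ) * Int.gcdB y N by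
      rw [← hb]; norm_cast]
    push_cast [hN]
    ring
  calc (x : ZMod N) = ((Nat.gcd y N : ℕ) : ZMod N) * (c : ZMod N) := by
        rw [← Nat.cast_mul, ← hc]
    _ = (y : ZMod N) * ((Int.gcdA y N * c : ℤ) : ZMod N) := by
        push_cast at this ⊢; rw [this]; ring

lemma zmod_pow2_comparable (N e : ℕ) (hN : N = 2 ^ e) (i j : ZMod N) :
    (∃ k : ℤ, i = j * (k : ZMod N)) ∨ (∃ k : ℤ, j = i * (k : ZMod N)) := by
  subst hN
  have : NeZero (2^e) := ⟨by positivity⟩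
  have hi : ((i.val : ℕ) : ZMod (2^e)) = i := ZMod.natCast_val i |>.trans (ZMod.cast_id _ _)
  have hj : ((j.val : ℕ) : ZMod (2^e)) = j := ZMod.natCast_val j |>.trans (ZMod.cast_id _ _)
  obtain ⟨ti, -, hti⟩ := (Nat.dvd_prime_pow Nat.prime_two).mp (Nat.gcd_dvd_right i.val (2^e))
  obtain ⟨tj, -, htj⟩ := (Nat.dvd_prime_pow Nat.prime_two).mp (Nat.gcd_dvd_right j.val (2^e))
  rcases le_total tj ti with hle | hle
  · left
    obtain ⟨k, hk⟩ := zmod_dvd_solve (2^e) i.val j.val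
      (dvd_trans (htj ▸ hti ▸ pow_dvd_pow 2 hle) (Nat.gcd_dvd_left _ _))
    exact ⟨k, by rw [← hi, hk, hj]⟩
  · right
    obtain ⟨k, hk⟩ := zmod_dvd_solve (2^e) j.val i.val
      (dvd_trans (hti ▸ htj ▸ pow_dvd_pow 2 hle) (Nat.gcd_dvd_left _ _))
    exact ⟨k, by rw [← hj, hk, hi]⟩

lemma two_mul_eq_zero_iff (M : ℕ) (hM : 0 < M) (i : ZMod (2*M)) :
    2 * i = 0 ↔ i = 0 ∨ i = (M : ZMod (2*M)) := by
  have : NeZero (2*M) := ⟨by omega⟩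
  have h2M : 2 * (M : ZMod (2*M)) = 0 := by
    have := ZMod.natCast_self (2*M); push_cast at this; linear_combination this
  constructor
  · intro h
    have hi : ((i.val : ℕ) : ZMod (2*M)) = i := ZMod.natCast_val i |>.trans (ZMod.cast_id _ _)
    have h2 : ((2 * i.val : ℕ) : ZMod (2*M)) = 0 := by push_cast [hi]; exact h
    have hdvd : 2*M ∣ 2 * i.val := (ZMod.natCast_eq_zero_iff _ _).mp h2
    have hMv : M ∣ i.val := (mul_dvd_mul_iff_left (by omega : (2:ℕ) ≠ 0)).mp hdvd
    have hlt : i.val < 2 * M := ZMod.val_lt i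
    obtain ⟨c, hc⟩ := hMv
    have hc2 : c < 2 := by nlinarith
    interval_cases c
    · left; rw [← hi, hc]; simp
    · right; rw [← hi, hc]; push_cast; ring
  · rintro (rfl | rfl)
    · ring
    · exact h2M

open QuaternionGroup in
lemma quat_adj_aa (M : ℕ) (h2 : ∃ e, 2*M = 2^e) (i j : ZMod (2*M)) :
    (powerGraph (QuaternionGroup M)).Adj (a i) (a j) ↔ i ≠ j := by
  rw [powerGraph_adj]
  constructor
  · rintro ⟨hne, -⟩ rfl; exact hne rfl
  · intro hij
    obtain ⟨e, he⟩ := h2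
    refine ⟨by simp [hij], ?_⟩
    rcases zmod_pow2_comparable (2*M) e he i j with ⟨k, hk⟩ | ⟨k, hk⟩
    · exact Or.inl ⟨k, by rw [a_zpow, ← hk]⟩
    · exact Or.inr ⟨k, by rw [a_zpow, ← hk]⟩

open QuaternionGroup in
lemma two_M_zero (M : ℕ) : 2 * (M : ZMod (2*M)) = 0 := by
  have := ZMod.natCast_self (2*M); push_cast at this; linear_combination this

open QuaternionGroup in
lemma quat_adj_ax (M : ℕ) (hM : 0 < M) (i j : ZMod (2*M)) :
    (powerGraph (QuaternionGroup M)).Adj (a i) (xa j) ↔ 2*i = 0 := by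
  rw [powerGraph_adj]
  constructor
  · rintro ⟨-, ⟨k, hk⟩ | ⟨k, hk⟩⟩
    · rcases Int.even_or_odd k with ⟨q, rfl⟩ | ⟨q, rfl⟩
      · rw [show q + q = 2*q by ring, xa_zpow_even] at hk
        rw [a.injEq] at hk
        rw [hk, show (2 : ZMod (2*M)) * ((M : ZMod (2*M)) * ((q:ℤ) : ZMod (2*M)))
            = (2 * (M : ZMod (2*M))) * ((q:ℤ) : ZMod (2*M)) by ring, two_M_zero, zero_mul]
      · rw [xa_zpow_odd] at hk; exact absurd hk (by simp)
    · rw [a_zpow] at hk; exact absurd hk (by simp)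
  · intro h
    rcases (two_mul_eq_zero_iff M hM i).mp h with rfl | rfl
    · exact ⟨(by intro h; cases h), Or.inl ⟨0, by rw [zpow_zero, QuaternionGroup.one_def]⟩⟩
    · exact ⟨by simp, Or.inl ⟨2, by rw [show (2:ℤ) = ((2:ℕ):ℤ) from rfl, zpow_natCast, xa_sq]⟩⟩

open QuaternionGroup in
lemma quat_adj_xx (M : ℕ) (hM : 0 < M) (i j : ZMod (2*M)) :
    (powerGraph (QuaternionGroup M)).Adj (xa i) (xa j) ↔ i ≠ j ∧ 2*(j-i) = 0 := by
  rw [powerGraph_adj]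
  constructor
  · rintro ⟨hne, ⟨k, hk⟩ | ⟨k, hk⟩⟩
    · refine ⟨fun h => hne (by rw [h]), ?_⟩
      rcases Int.even_or_odd k with ⟨q, rfl⟩ | ⟨q, rfl⟩
      · rw [show q + q = 2*q by ring, xa_zpow_even] at hk; exact absurd hk (by simp)
      · rw [xa_zpow_odd, xa.injEq] at hk
        rw [hk]
        calc 2 * (j - (j - (M : ZMod (2*M)) * ((q:ℤ) : ZMod (2*M))))
            = (2 * (M : ZMod (2*M))) * ((q:ℤ) : ZMod (2*M)) := by ring
          _ = 0 := by rw [two_M_zero, zero_mul]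
    · refine ⟨fun h => hne (by rw [h]), ?_⟩
      rcases Int.even_or_odd k with ⟨q, rfl⟩ | ⟨q, rfl⟩
      · rw [show q + q = 2*q by ring, xa_zpow_even] at hk; exact absurd hk (by simp)
      · rw [xa_zpow_odd, xa.injEq] at hk
        rw [hk]
        calc 2 * (i - (M : ZMod (2*M)) * ((q:ℤ) : ZMod (2*M)) - i)
            = -((2 * (M : ZMod (2*M))) * ((q:ℤ) : ZMod (2*M))) := by ring
          _ = 0 := by rw [two_M_zero, zero_mul, neg_zero]
  · rintro ⟨hne, h⟩
    rcases (two_mul_eq_zero_iff M hM _).mp h with h0 | hMe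
    · exact absurd (by linear_combination -h0 : i = j) hne
    · refine ⟨by simp [fun h => hne h], Or.inl ⟨2*(-1)+1, ?_⟩⟩
      rw [xa_zpow_odd, xa.injEq]
      push_cast
      linear_combination -hMe - two_M_zero M

open DihedralGroup in
lemma dih_adj_rr (N : ℕ) (i j : ZMod N) :
    (commutingGraph (DihedralGroup N)).Adj (r i) (r j) ↔ i ≠ j := by
  rw [commutingGraph_adj]
  constructor
  · rintro ⟨hne, -⟩ rfl; exact hne rfl
  · intro hij; exact ⟨by simp [hij], by rw [r_mul_r, r_mul_r, add_comm]⟩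

open DihedralGroup in
lemma dih_adj_rs (N : ℕ) (i j : ZMod N) :
    (commutingGraph (DihedralGroup N)).Adj (r i) (sr j) ↔ 2*i = 0 := by
  rw [commutingGraph_adj, r_mul_sr, sr_mul_r]
  simp only [ne_eq, reduceCtorEq, not_false_eq_true, true_and, sr.injEq]
  constructor
  · intro h; linear_combination -h
  · intro h; linear_combination -h

open DihedralGroup in
lemma dih_adj_ss (N : ℕ) (i j : ZMod N) :
    (commutingGraph (DihedralGroup N)).Adj (sr i) (sr j) ↔ i ≠ j ∧ 2*(j-i) = 0 := by
  rw [commutingGraph_adj, sr_mul_sr, sr_mul_sr]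
  simp only [ne_eq, sr.injEq, r.injEq]
  constructor
  · rintro ⟨hne, h⟩; exact ⟨hne, by linear_combination h⟩
  · rintro ⟨hne, h⟩; exact ⟨hne, by linear_combination h⟩

open QuaternionGroup DihedralGroup in
/-- For n ≥ 2, the power graph of `Q_{2^(n+1)}` is isomorphic to the commuting graph of
`D_{2·2^n}`, via the vertex map `h^i x^j ↦ a^i b^j`. -/
theorem stmt10 (n : ℕ) (hn : 2 ≤ n) :
    ∃ e : powerGraph (QuaternionGroup (2 ^ (n - 1))) ≃g
        commutingGraph (DihedralGroup (2 ^ n)),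
      (∀ i : ZMod (2 * 2 ^ (n - 1)), e (a i) = r (i.val : ZMod (2 ^ n))) ∧
        (∀ i : ZMod (2 * 2 ^ (n - 1)),
          e (a i * xa 0) = r (i.val : ZMod (2 ^ n)) * sr 0) := by
  have hMN : 2 * 2 ^ (n-1) = 2 ^ n := by
    conv_rhs => rw [show n = (n-1) + 1 by omega]
    rw [pow_succ]; ring
  have hM : 0 < 2 ^ (n-1) := by positivity
  haveI : NeZero (2 * 2 ^ (n-1)) := ⟨by positivity⟩
  haveI : NeZero (2 ^ n) := ⟨by positivity⟩
  set ψ : ZMod (2 * 2 ^ (n-1)) →+* ZMod (2 ^ n) :=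
    ZMod.castHom (dvd_of_eq hMN.symm) (ZMod (2 ^ n)) with hψ
  have hψval : ∀ i : ZMod (2 * 2 ^ (n-1)), ψ i = ((i.val : ℕ) : ZMod (2 ^ n)) := fun i => by
    rw [hψ, ZMod.castHom_apply, ← ZMod.natCast_val]
  have hψvv : ∀ i : ZMod (2 * 2 ^ (n-1)), (ψ i).val = i.val := fun i => by
    rw [hψval, ZMod.val_cast_of_lt (hMN ▸ ZMod.val_lt i)]
  set ψ' : ZMod (2 ^ n) → ZMod (2 * 2 ^ (n-1)) := fun x => ((x.val : ℕ) : _) with hψ'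
  have hψ'ψ : ∀ i, ψ' (ψ i) = i := fun i => by
    show (((ψ i).val : ℕ) : ZMod (2 * 2 ^ (n-1))) = i
    rw [hψvv]; exact (ZMod.natCast_val i).trans (ZMod.cast_id _ _)
  have hψ'vv : ∀ x : ZMod (2 ^ n), (ψ' x).val = x.val := fun x => by
    show (((x.val : ℕ) : ZMod (2 * 2 ^ (n-1)))).val = x.val
    exact ZMod.val_cast_of_lt (hMN.symm ▸ ZMod.val_lt x)
  have hψψ' : ∀ x, ψ (ψ' x) = x := fun x => by
    rw [hψval, hψ'vv]; exact (ZMod.natCast_val x).trans (ZMod.cast_id _ _)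
  have hψinj : Function.Injective ψ := fun i j h => by rw [← hψ'ψ i, h, hψ'ψ]
  have hψ2 : ∀ i, 2 * i = 0 ↔ 2 * ψ i = 0 := fun i => by
    rw [show (2 : ZMod (2^n)) * ψ i = ψ (2 * i) by rw [map_mul, map_ofNat]]
    exact ⟨fun h => by rw [h, map_zero], fun h => hψinj (by rw [h, map_zero])⟩
  refine ⟨⟨⟨fun x => match x with | .a i => .r (ψ i) | .xa i => .sr (ψ i),
             fun y => match y with | .r x => .a (ψ' x) | .sr x => .xa (ψ' x),
             ?_, ?_⟩, ?_⟩, ?_, ?_⟩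
  · rintro (i | i) <;> simp only [hψ'ψ]
  · rintro (x | x) <;> simp only [hψψ']
  · rintro (i | i) (j | j)
    · rw [Equiv.coe_fn_mk]
      rw [dih_adj_rr, quat_adj_aa _ ⟨n, hMN⟩, hψinj.ne_iff]
    · rw [Equiv.coe_fn_mk]
      rw [dih_adj_rs, quat_adj_ax _ hM, hψ2]
    · rw [Equiv.coe_fn_mk]
      rw [(commutingGraph _).adj_comm, (powerGraph _).adj_comm,
        dih_adj_rs, quat_adj_ax _ hM, hψ2]
    · rw [Equiv.coe_fn_mk]
      rw [dih_adj_ss, quat_adj_xx _ hM, hψinj.ne_iff, ← map_sub, hψ2]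
  · intro i
    show DihedralGroup.r (ψ i) = DihedralGroup.r ((i.val : ℕ) : ZMod (2^n))
    rw [hψval]
  · intro i
    show (match (QuaternionGroup.a i * QuaternionGroup.xa 0 : QuaternionGroup (2^(n-1))) with
      | .a i => DihedralGroup.r (ψ i) | .xa i => DihedralGroup.sr (ψ i))
      = DihedralGroup.r ((i.val : ℕ) : ZMod (2^n)) * DihedralGroup.sr 0
    rw [a_mul_xa, r_mul_sr]
    show DihedralGroup.sr (ψ (0 - i)) = DihedralGroup.sr (0 - ((i.val : ℕ) : ZMod (2^n)))
    rw [map_sub, map_zero, hψval]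
end

section
/- For every m ≥ 2, the enhanced power graph of the dicyclic group Q_{4m} equals its commuting graph: distinct elements of Q_{4m} commute if and only if they generate a cyclic subgroup. -/
lemma isCyclic_zpowers {G : Type*} [Group G] (g : G) : IsCyclic ↥(Subgroup.zpowers g) :=
  ⟨⟨g, Subgroup.mem_zpowers g⟩, fun ⟨x, hx⟩ => by
    obtain ⟨n, hn⟩ := hx
    exact ⟨n, Subtype.ext (by simpa using hn)⟩⟩

lemma cyclic_closure_of_mem_zpowers {G : Type*} [Group G] {x y g : G}
    (hx : x ∈ Subgroup.zpowers g) (hy : y ∈ Subgroup.zpowers g) :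
    IsCyclic ↥(Subgroup.closure {x, y}) := by
  have hle : Subgroup.closure {x, y} ≤ Subgroup.zpowers g := by
    rw [Subgroup.closure_le]
    rintro z (rfl | rfl) <;> assumption
  have := isCyclic_zpowers g
  exact Subgroup.isCyclic_of_le hle

lemma two_eq_zero_iff {m : ℕ} (hm : 2 ≤ m) (i : ZMod (2 * m)) :
    i + i = 0 ↔ i = 0 ∨ i = (m : ZMod (2 * m)) := by
  haveI : NeZero (2 * m) := ⟨by omega⟩
  constructor
  · intro h
    have hv : (2 * i.val) % (2 * m) = 0 := by
      have := congrArg ZMod.val h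
      rw [ZMod.val_add, ZMod.val_zero] at this
      rw [two_mul]
      exact this
    have hd : (2 * m) ∣ 2 * i.val := Nat.dvd_of_mod_eq_zero hv
    have hd' : m ∣ i.val := (mul_dvd_mul_iff_left (two_ne_zero)).mp hd
    have hlt : i.val < 2 * m := ZMod.val_lt i
    obtain ⟨c, hc⟩ := hd'
    have hc2 : c < 2 := by nlinarith
    interval_cases c
    · left
      have : i.val = 0 := by omega
      have := congrArg (Nat.cast : ℕ → ZMod (2 * m)) this
      rwa [ZMod.natCast_val, ZMod.cast_id, Nat.cast_zero] at this
    · right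
      have : i.val = m := by omega
      have := congrArg (Nat.cast : ℕ → ZMod (2 * m)) this
      rwa [ZMod.natCast_val, ZMod.cast_id] at this
  · rintro (rfl | rfl)
    · simp
    · rw [← Nat.cast_add, ← two_mul, ZMod.natCast_self]

/-- For m ≥ 2, the enhanced power graph of `Q_{4m}` equals its commuting graph: distinct
elements commute iff they generate a cyclic subgroup. -/
theorem stmt19 (m : ℕ) (hm : 2 ≤ m) :
    enhancedPowerGraph (QuaternionGroup m) = commutingGraph (QuaternionGroup m) ∧
      ∀ x y : QuaternionGroup m, x ≠ y →
        (x * y = y * x ↔ IsCyclic ↥(Subgroup.closure {x, y})) := by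
  have key : ∀ x y : QuaternionGroup m, x ≠ y →
      (x * y = y * x ↔ IsCyclic ↥(Subgroup.closure {x, y})) := by
    intro x y hne
    haveI : NeZero (2 * m) := ⟨by omega⟩
    constructor
    · intro hcomm
      rcases x with i | i <;> rcases y with j | j
      · -- a i, a j : both powers of a 1
        refine cyclic_closure_of_mem_zpowers (g := QuaternionGroup.a 1) ?_ ?_
        · exact ⟨(i.val : ℤ), by
            show QuaternionGroup.a 1 ^ ((i.val : ℕ) : ℤ) = QuaternionGroup.a i
            rw [zpow_natCast, QuaternionGroup.a_one_pow, ZMod.natCast_val, ZMod.cast_id]⟩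
        · exact ⟨(j.val : ℤ), by
            show QuaternionGroup.a 1 ^ ((j.val : ℕ) : ℤ) = QuaternionGroup.a j
            rw [zpow_natCast, QuaternionGroup.a_one_pow, ZMod.natCast_val, ZMod.cast_id]⟩
      · -- a i, xa j
        simp only [QuaternionGroup.a_mul_xa, QuaternionGroup.xa_mul_a,
          QuaternionGroup.xa.injEq] at hcomm
        have h2 : i + i = 0 := by linear_combination -hcomm
        rcases (two_eq_zero_iff hm i).mp h2 with rfl | rfl
        · refine cyclic_closure_of_mem_zpowers (g := QuaternionGroup.xa j) ?_
            (Subgroup.mem_zpowers _)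
          exact ⟨0, by simp⟩
        · refine cyclic_closure_of_mem_zpowers (g := QuaternionGroup.xa j) ?_
            (Subgroup.mem_zpowers _)
          exact ⟨2, by
            show QuaternionGroup.xa j ^ (2 : ℤ) = _
            rw [show (2 : ℤ) = ((2 : ℕ) : ℤ) by norm_num, zpow_natCast]; simp⟩
      · -- xa i, a j
        simp only [QuaternionGroup.a_mul_xa, QuaternionGroup.xa_mul_a,
          QuaternionGroup.xa.injEq] at hcomm
        have h2 : j + j = 0 := by linear_combination hcomm
        rcases (two_eq_zero_iff hm j).mp h2 with rfl | rfl
        · refine cyclic_closure_of_mem_zpowers (g := QuaternionGroup.xa i)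
            (Subgroup.mem_zpowers _) ?_
          exact ⟨0, by simp⟩
        · refine cyclic_closure_of_mem_zpowers (g := QuaternionGroup.xa i)
            (Subgroup.mem_zpowers _) ?_
          exact ⟨2, by
            show QuaternionGroup.xa i ^ (2 : ℤ) = _
            rw [show (2 : ℤ) = ((2 : ℕ) : ℤ) by norm_num, zpow_natCast]; simp⟩
      · -- xa i, xa j
        simp only [QuaternionGroup.xa_mul_xa, QuaternionGroup.a.injEq] at hcomm
        have h2 : (j - i) + (j - i) = 0 := by linear_combination hcomm
        rcases (two_eq_zero_iff hm _).mp h2 with h | h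
        · exact absurd (congrArg QuaternionGroup.xa (by linear_combination -h)) hne
        · refine cyclic_closure_of_mem_zpowers (g := QuaternionGroup.xa i)
            (Subgroup.mem_zpowers _) ?_
          refine ⟨3, ?_⟩
          show QuaternionGroup.xa i ^ (3 : ℤ) = _
          rw [show (3 : ℤ) = 2 + 1 by norm_num, zpow_add, zpow_two, zpow_one]
          simp only [QuaternionGroup.xa_mul_xa, QuaternionGroup.a_mul_xa]
          have hmm : (m : ZMod (2 * m)) + m = 0 := by
            rw [← Nat.cast_add, ← two_mul, ZMod.natCast_self]
          congr 1
          linear_combination -h - hmm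
    · intro hcyc
      letI := hcyc
      letI : CommGroup ↥(Subgroup.closure ({x, y} : Set (QuaternionGroup m))) :=
        IsCyclic.commGroup
      have hx : x ∈ Subgroup.closure ({x, y} : Set (QuaternionGroup m)) :=
        Subgroup.subset_closure (by simp)
      have hy : y ∈ Subgroup.closure ({x, y} : Set (QuaternionGroup m)) :=
        Subgroup.subset_closure (by simp)
      have := mul_comm (⟨x, hx⟩ : ↥(Subgroup.closure ({x, y} : Set (QuaternionGroup m)))) ⟨y, hy⟩
      exact congrArg Subtype.val this
  refine ⟨?_, key⟩
  ext x y
  show (x ≠ y ∧ _) ↔ (x ≠ y ∧ _)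
  constructor
  · rintro ⟨hne, h⟩; exact ⟨hne, ((key x y hne).mpr h)⟩
  · rintro ⟨hne, h⟩; exact ⟨hne, ((key x y hne).mp h)⟩
end
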